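/- For any sequence of real numbers (c_j) that is absolutely summable, and integers n ≥ 1 and 0 ≤ k < 2n, the approximated Chebyshev coefficient c_{k,n} obtained from the n-point Gauss–Chebyshev quadrature satisfies c_{k,n} − c_k = Σ_{j=1}^∞ (−1)^j (c_{2jn−k} + c_{2jn+k}), where c_{k,n} = (2/n) Σ_{l=1}^n f(t_l) T_k(t_l) with t_l = cos((2l−1)π/(2n)), and c_k are the exact Chebyshev coefficients of f. -/

import Mathlib

open Real Polynomial


noncomputable def chebE (n : ℕ) (m : ℤ) : ℝ :=
  if (2 * (n : ℤ)) ∣ m then (-1 : ℝ) ^ (m / (2 * (n : ℤ))) else 0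

lemma chebE_abs_le (n : ℕ) (m : ℤ) : |chebE n m| ≤ 1 := by
  unfold chebE
  split
  · rcases Int.even_or_odd (m / (2 * (n : ℤ))) with h | h
    · rw [h.neg_one_zpow]; norm_num
    · rw [h.neg_one_zpow]; norm_num
  · norm_num

lemma chebE_eq (n : ℕ) (hn : 1 ≤ n) {m t : ℤ} (h : m = 2 * n * t) :
    chebE n m = (-1 : ℝ) ^ t := by
  have h2n : (2 * (n : ℤ)) ≠ 0 := by positivity
  rw [chebE, if_pos ⟨t, h⟩, h, Int.mul_ediv_cancel_left _ h2n]

lemma chebE_of_not_dvd (n : ℕ) {m : ℤ} (h : ¬ (2 * (n : ℤ)) ∣ m) : chebE n m = 0 :=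
  if_neg h

lemma chebE_nat (n : ℕ) (hn : 1 ≤ n) (q : ℕ) :
    chebE n ((2 * (q + 1) * n : ℕ) : ℤ) = (-1 : ℝ) ^ (q + 1) := by
  have h : ((2 * (q + 1) * n : ℕ) : ℤ) = 2 * (n : ℤ) * ((q : ℤ) + 1) := by push_cast; ring
  rw [chebE_eq n hn h]
  rw [show ((q : ℤ) + 1) = ((q + 1 : ℕ) : ℤ) by push_cast; ring, zpow_natCast]

lemma chebE_zero (n : ℕ) (hn : 1 ≤ n) : chebE n 0 = 1 := by
  have h : (0 : ℤ) = 2 * (n : ℤ) * 0 := by ring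
  rw [chebE_eq n hn h, zpow_zero]

lemma chebE_small (n : ℕ) (hn : 1 ≤ n) {k : ℕ} (h0 : 0 < k) (hk : k < 2 * n) :
    chebE n (k : ℤ) = 0 := by
  apply chebE_of_not_dvd
  intro hd
  have hd' : 2 * n ∣ k := by
    have := hd
    rwa [show (2 * (n : ℤ)) = ((2 * n : ℕ) : ℤ) by push_cast; ring, Int.natCast_dvd_natCast] at this
  have := Nat.eq_zero_of_dvd_of_lt hd' hk
  omega

noncomputable def chebX (n l : ℕ) : ℝ := (2 * (l : ℝ) - 1) * Real.pi / (2 * n)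

lemma cheb_A (n : ℕ) (hn : 1 ≤ n) (m : ℤ) :
    ∑ l ∈ Finset.Icc 1 n, Real.cos ((m : ℝ) * chebX n l) = (n : ℝ) * chebE n m := by
  have hn0 : (n : ℝ) ≠ 0 := by positivity
  simp only [chebX]
  by_cases h : (2 * (n : ℤ)) ∣ m
  · obtain ⟨q, hq⟩ := h
    have hterm : ∀ l ∈ Finset.Icc 1 n,
        Real.cos ((m : ℝ) * ((2 * (l : ℝ) - 1) * π / (2 * n))) = (-1 : ℝ) ^ q := by
      intro l hl
      have hmr : (m : ℝ) = 2 * (n : ℝ) * (q : ℝ) := by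
        exact_mod_cast congrArg (fun z : ℤ => (z : ℝ)) hq
      have hang : (m : ℝ) * ((2 * (l : ℝ) - 1) * π / (2 * n)) =
          ((q * (2 * (l : ℤ) - 1) : ℤ) : ℝ) * π := by
        field_simp [hmr]
        rw [hmr]; push_cast; ring
      rw [hang]
      have hcos := Real.cos_int_mul_pi_sub 0 (q * (2 * (l : ℤ) - 1))
      simp only [sub_zero, Real.cos_zero, mul_one] at hcos
      rw [hcos]
      have hexp : q * (2 * (l : ℤ) - 1) = 2 * (q * ((l : ℤ) - 1)) + q := by ring
      rw [hexp, zpow_add₀ (by norm_num : (-1 : ℝ) ≠ 0), zpow_mul]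
      norm_num
    rw [Finset.sum_congr rfl hterm, Finset.sum_const, Nat.card_Icc, chebE,
      if_pos ⟨q, hq⟩, hq, Int.mul_ediv_cancel_left _ (by positivity : (2 * (n : ℤ)) ≠ 0)]
    simp [nsmul_eq_mul]
  · set α : ℝ := (m : ℝ) * π / (2 * n) with hα
    have hsin : Real.sin α ≠ 0 := by
      intro hs
      obtain ⟨t, ht⟩ := Real.sin_eq_zero_iff.mp hs
      apply h
      refine ⟨t, ?_⟩
      have hπ : π ≠ 0 := Real.pi_ne_zero
      have h2 : ((2 * (n : ℤ) * t : ℤ) : ℝ) * π = (m : ℝ) * π := by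
        push_cast
        field_simp [hα] at ht
        have h2nα' : 2 * (n : ℝ) * α = (m : ℝ) * π := by rw [hα]; field_simp
        linear_combination 2 * (n : ℝ) * ht + h2nα'
      have h3 := mul_right_cancel₀ hπ h2
      exact_mod_cast h3.symm
    have key : 2 * Real.sin α * ∑ l ∈ Finset.Icc 1 n,
        Real.cos ((m : ℝ) * ((2 * (l : ℝ) - 1) * π / (2 * n))) = 0 := by
      rw [Finset.mul_sum]
      have hterm : ∀ l ∈ Finset.Icc 1 n,
          2 * Real.sin α * Real.cos ((m : ℝ) * ((2 * (l : ℝ) - 1) * π / (2 * n))) =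
            Real.sin (2 * (l : ℝ) * α) - Real.sin (2 * ((l : ℝ) - 1) * α) := by
        intro l hl
        have hang : (m : ℝ) * ((2 * (l : ℝ) - 1) * π / (2 * n)) = (2 * (l : ℝ) - 1) * α := by
          rw [hα]; ring
        rw [hang]
        have h1 : 2 * (l : ℝ) * α = (2 * (l : ℝ) - 1) * α + α := by ring
        have h2 : 2 * ((l : ℝ) - 1) * α = (2 * (l : ℝ) - 1) * α - α := by ring
        rw [h1, h2, Real.sin_add, Real.sin_sub]
        ring
      rw [Finset.sum_congr rfl hterm, ← Finset.Ico_add_one_right_eq_Icc, Finset.sum_Ico_eq_sum_range,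
        Nat.add_sub_cancel]
      have hre : ∀ i ∈ Finset.range n,
          Real.sin (2 * ((1 + i : ℕ) : ℝ) * α) - Real.sin (2 * (((1 + i : ℕ) : ℝ) - 1) * α) =
            Real.sin (2 * ((i + 1 : ℕ) : ℝ) * α) - Real.sin (2 * ((i : ℕ) : ℝ) * α) := by
        intro i _
        push_cast
        ring_nf
      rw [Finset.sum_congr rfl hre,
        Finset.sum_range_sub (fun i => Real.sin (2 * ((i : ℕ) : ℝ) * α))]
      have h2nα : 2 * (n : ℝ) * α = (m : ℝ) * π := by
        rw [hα]; field_simp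
      rw [h2nα]
      simp [Real.sin_int_mul_pi m]
    have hs2 : (2 : ℝ) * Real.sin α ≠ 0 := by simp [hsin]
    rcases mul_eq_zero.mp key with h1 | h1
    · exact absurd h1 hs2
    · rw [h1, chebE, if_neg h, mul_zero]

lemma cheb_B (n : ℕ) (hn : 1 ≤ n) (a b : ℤ) :
    (2 / (n : ℝ)) * ∑ l ∈ Finset.Icc 1 n,
        Real.cos ((a : ℝ) * chebX n l) * Real.cos ((b : ℝ) * chebX n l) =
      chebE n (a + b) + chebE n (a - b) := by
  have hn0 : (n : ℝ) ≠ 0 := by positivity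
  have hterm : ∀ l ∈ Finset.Icc 1 n,
      Real.cos ((a : ℝ) * chebX n l) * Real.cos ((b : ℝ) * chebX n l) =
        (Real.cos (((a + b : ℤ) : ℝ) * chebX n l) +
          Real.cos (((a - b : ℤ) : ℝ) * chebX n l)) / 2 := by
    intro l _
    push_cast
    rw [add_mul, sub_mul, Real.cos_add, Real.cos_sub]
    ring
  rw [Finset.sum_congr rfl hterm, ← Finset.sum_div, Finset.sum_add_distrib,
    cheb_A n hn (a + b), cheb_A n hn (a - b)]
  field_simp

lemma cheb_bound (n k q : ℕ) (hn : 1 ≤ n) (hk : k < 2 * n) : k + 1 ≤ 2 * (q + 1) * n := by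
  have h := Nat.mul_le_mul_right n (show 2 * 1 ≤ 2 * (q + 1) by omega)
  omega

lemma cheb_plus (c : ℕ → ℝ) (n : ℕ) (hn : 1 ≤ n) (k : ℕ) (hk : k < 2 * n) :
    ∑' j : ℕ, c (j + 1) * chebE n ((j : ℤ) + 1 + (k : ℤ)) =
      ∑' q : ℕ, (-1 : ℝ) ^ (q + 1) * c (2 * (q + 1) * n - k) := by
  apply tsum_eq_tsum_of_ne_zero_bij (i := fun q => 2 * ((q : ℕ) + 1) * n - k - 1)
  · -- injective
    rintro ⟨q, hq⟩ ⟨q', hq'⟩ h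
    dsimp only at h
    have b1 := cheb_bound n k q hn hk
    have b2 := cheb_bound n k q' hn hk
    have h2 : 2 * (q + 1) * n = 2 * (q' + 1) * n := by
      generalize hA : 2 * (q + 1) * n = A at b1 h
      generalize hB : 2 * (q' + 1) * n = B at b2 h
      omega
    have h3 : (q + 1) * (2 * n) = (q' + 1) * (2 * n) := by
      rw [show (q + 1) * (2 * n) = 2 * (q + 1) * n by ring,
        show (q' + 1) * (2 * n) = 2 * (q' + 1) * n by ring, h2]
    have h4 := Nat.eq_of_mul_eq_mul_right (show 0 < 2 * n by omega) h3
    exact Subtype.ext (show q = q' by omega)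
  · -- support ⊆ range
    intro j hj
    simp only [Function.mem_support] at hj
    have hcj : c (j + 1) ≠ 0 := fun h => hj (by rw [h, zero_mul])
    have hE : chebE n ((j : ℤ) + 1 + (k : ℤ)) ≠ 0 := fun h => hj (by rw [h, mul_zero])
    have hdvd : (2 * (n : ℤ)) ∣ ((j : ℤ) + 1 + (k : ℤ)) := by
      by_contra hd
      exact hE (chebE_of_not_dvd n hd)
    obtain ⟨t, ht⟩ := hdvd
    have htpos : 0 < t := by
      have hpos : (0 : ℤ) < 2 * (n : ℤ) * t := by rw [← ht]; positivity
      rcases mul_pos_iff.mp hpos with ⟨_, h2⟩ | ⟨h1, _⟩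
      · exact h2
      · exfalso
        have h5 : (0 : ℤ) < 2 * (n : ℤ) := by positivity
        omega
    set q : ℕ := t.toNat - 1 with hqdef
    have hq1 : (q : ℤ) + 1 = t := by omega
    have hA : j + 1 + k = 2 * (q + 1) * n := by
      have : ((j : ℤ) + 1 + (k : ℤ)) = ((2 * (q + 1) * n : ℕ) : ℤ) := by
        rw [ht]; push_cast; rw [← hq1]; ring
      exact_mod_cast this
    have hidx : 2 * (q + 1) * n - k = j + 1 := by
      generalize hA' : 2 * (q + 1) * n = A at hA
      omega
    refine ⟨⟨q, ?_⟩, ?_⟩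
    · simp only [Function.mem_support, hidx]
      intro h
      rcases mul_eq_zero.mp h with h1 | h1
      · exact pow_ne_zero _ (by norm_num : (-1 : ℝ) ≠ 0) h1
      · exact hcj h1
    · dsimp only
      generalize hA' : 2 * (q + 1) * n = A at hA
      omega
  · -- values agree
    rintro ⟨q, hq⟩
    dsimp only
    have b1 := cheb_bound n k q hn hk
    have hE := chebE_nat n hn q
    generalize hA : 2 * (q + 1) * n = A at b1 hE ⊢
    have hidx : A - k - 1 + 1 = A - k := by omega
    rw [hidx]
    have harg : ((A - k - 1 : ℕ) : ℤ) + 1 + (k : ℤ) = ((A : ℕ) : ℤ) := by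
      rw [Nat.sub_sub, Nat.cast_sub (by omega : k + 1 ≤ A)]
      push_cast
      ring
    rw [harg, hE]
    ring

lemma cheb_minus (c : ℕ → ℝ) (hc : Summable fun j => |c j|) (n : ℕ) (hn : 1 ≤ n) (k : ℕ)
    (hk : k < 2 * n) :
    ∑' j : ℕ, c (j + 1) * chebE n ((j : ℤ) + 1 - (k : ℤ)) =
      (if k = 0 then 0 else c k) + ∑' q : ℕ, (-1 : ℝ) ^ (q + 1) * c (2 * (q + 1) * n + k) := by
  set h : ℕ → ℝ := fun q => if q = 0 then (if k = 0 then 0 else c k)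
    else (-1 : ℝ) ^ q * c (2 * q * n + k) with hh
  have hbnd : ∀ q ∈ Function.support h, 1 ≤ 2 * q * n + k := by
    intro q hq
    rcases Nat.eq_zero_or_pos q with rfl | hq1
    · simp only [hh, if_pos rfl, Function.mem_support] at hq
      rcases Nat.eq_zero_or_pos k with rfl | hk1
      · simp at hq
      · omega
    · have : 1 * 1 ≤ q * n := Nat.mul_le_mul hq1 hn
      have h5 : 2 * q * n = 2 * (q * n) := by ring
      omega
  have hstep : ∑' j : ℕ, c (j + 1) * chebE n ((j : ℤ) + 1 - (k : ℤ)) = ∑' q, h q := by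
    apply tsum_eq_tsum_of_ne_zero_bij (i := fun q => 2 * (q : ℕ) * n + k - 1)
    · rintro ⟨q, hq⟩ ⟨q', hq'⟩ heq
      dsimp only at heq
      have e1 := hbnd q hq
      have e2 := hbnd q' hq'
      have h2 : 2 * q * n = 2 * q' * n := by
        generalize hA : 2 * q * n = A at e1 heq
        generalize hB : 2 * q' * n = B at e2 heq
        omega
      have h3 : q * (2 * n) = q' * (2 * n) := by
        rw [show q * (2 * n) = 2 * q * n by ring, show q' * (2 * n) = 2 * q' * n by ring, h2]
      exact Subtype.ext (Nat.eq_of_mul_eq_mul_right (by omega) h3)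
    · intro j hj
      simp only [Function.mem_support] at hj
      have hcj : c (j + 1) ≠ 0 := fun h' => hj (by rw [h', zero_mul])
      have hE : chebE n ((j : ℤ) + 1 - (k : ℤ)) ≠ 0 := fun h' => hj (by rw [h', mul_zero])
      have hdvd : (2 * (n : ℤ)) ∣ ((j : ℤ) + 1 - (k : ℤ)) := by
        by_contra hd
        exact hE (chebE_of_not_dvd n hd)
      obtain ⟨t, ht⟩ := hdvd
      have htnn : 0 ≤ t := by
        by_contra hneg
        push_neg at hneg
        have h1 : t ≤ -1 := by omega
        have h2 : 2 * (n : ℤ) * t ≤ -(2 * (n : ℤ)) := by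
          have := mul_le_mul_of_nonneg_left h1 (show (0:ℤ) ≤ 2 * n by positivity)
          simpa using this
        have hkk : (k : ℤ) < 2 * n := by exact_mod_cast hk
        have hj0 : (0 : ℤ) ≤ (j : ℤ) := Int.natCast_nonneg j
        omega
      set q : ℕ := t.toNat with hqdef
      have hq1 : (q : ℤ) = t := by omega
      have hA : j + 1 = 2 * q * n + k := by
        have : (j : ℤ) + 1 = ((2 * q * n + k : ℕ) : ℤ) := by
          push_cast
          rw [hq1]
          linear_combination ht
        exact_mod_cast this
      refine ⟨⟨q, ?_⟩, ?_⟩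
      · simp only [Function.mem_support, hh]
        by_cases hq0 : q = 0
        · rw [hq0] at hA
          norm_num at hA
          rw [if_pos hq0, if_neg (by omega), (by omega : k = j + 1)]
          exact hcj
        · rw [if_neg hq0]
          intro h'
          rcases mul_eq_zero.mp h' with h1 | h1
          · exact pow_ne_zero _ (by norm_num : (-1:ℝ) ≠ 0) h1
          · rw [← hA] at h1; exact hcj h1
      · dsimp only
        generalize 2 * q * n = A at hA ⊢
        omega
    · rintro ⟨q, hq⟩
      dsimp only
      have e1 := hbnd q hq
      have hidx : 2 * q * n + k - 1 + 1 = 2 * q * n + k := by omega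
      rw [hidx]
      have harg : ((2 * q * n + k - 1 : ℕ) : ℤ) + 1 - (k : ℤ) = 2 * (n : ℤ) * (q : ℤ) := by
        rw [Nat.cast_sub (by omega : 1 ≤ 2 * q * n + k)]
        push_cast
        ring
      rw [harg, chebE_eq n hn rfl]
      rcases Nat.eq_zero_or_pos q with rfl | hqpos
      · have hk1 : ¬ (k = 0) := by omega
        simp only [hh, if_pos rfl, if_neg hk1]
        norm_num
      · simp only [hh, if_neg (by omega : ¬ q = 0), zpow_natCast]
        ring
  have hcomp : Summable fun q => |c (2 * q * n + k)| := by
    have hinj : Function.Injective (fun q : ℕ => 2 * q * n + k) := by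
      intro q q' hqq
      simp only at hqq
      have h3 : q * (2 * n) = q' * (2 * n) := by
        rw [show q * (2 * n) = 2 * q * n by ring, show q' * (2 * n) = 2 * q' * n by ring]
        omega
      exact Nat.eq_of_mul_eq_mul_right (by omega) h3
    exact hc.comp_injective hinj
  have hsumh : Summable h := by
    apply Summable.of_norm_bounded hcomp
    intro q
    by_cases hq0 : q = 0
    · subst hq0
      by_cases hk0 : k = 0
      · subst hk0
        simp [hh]
      · simp only [hh, if_pos rfl, if_neg hk0, Real.norm_eq_abs]
        norm_num
    · simp only [hh, if_neg hq0, Real.norm_eq_abs, abs_mul, abs_pow, abs_neg, abs_one,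
        one_pow, one_mul, le_refl]
  rw [hstep, Summable.tsum_eq_zero_add hsumh]
  have h0 : h 0 = (if k = 0 then 0 else c k) := by simp [hh]
  have h1 : ∀ q : ℕ, h (q + 1) = (-1 : ℝ) ^ (q + 1) * c (2 * (q + 1) * n + k) := by
    intro q
    simp only [hh, if_neg (Nat.succ_ne_zero q)]
  rw [h0]
  simp only [h1]

lemma cheb_injp (n k : ℕ) (hn : 1 ≤ n) (hk : k < 2 * n) :
    Function.Injective (fun q : ℕ => 2 * (q + 1) * n - k) := by
  intro q q' h
  have h' : 2 * (q + 1) * n - k = 2 * (q' + 1) * n - k := h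
  have b1 := cheb_bound n k q hn hk
  have b2 := cheb_bound n k q' hn hk
  have h2 : 2 * (q + 1) * n = 2 * (q' + 1) * n := by
    generalize hA : 2 * (q + 1) * n = A at b1 h'
    generalize hB : 2 * (q' + 1) * n = B at b2 h'
    omega
  have h3 : (q + 1) * (2 * n) = (q' + 1) * (2 * n) := by
    rw [show (q + 1) * (2 * n) = 2 * (q + 1) * n by ring,
      show (q' + 1) * (2 * n) = 2 * (q' + 1) * n by ring, h2]
  have h4 := Nat.eq_of_mul_eq_mul_right (show 0 < 2 * n by omega) h3
  omega

lemma cheb_injm (n k : ℕ) (hn : 1 ≤ n) :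
    Function.Injective (fun q : ℕ => 2 * (q + 1) * n + k) := by
  intro q q' h
  have h' : 2 * (q + 1) * n + k = 2 * (q' + 1) * n + k := h
  have h2 : 2 * (q + 1) * n = 2 * (q' + 1) * n := by omega
  have h3 : (q + 1) * (2 * n) = (q' + 1) * (2 * n) := by
    rw [show (q + 1) * (2 * n) = 2 * (q + 1) * n by ring,
      show (q' + 1) * (2 * n) = 2 * (q' + 1) * n by ring, h2]
  have h4 := Nat.eq_of_mul_eq_mul_right (show 0 < 2 * n by omega) h3
  omega

/-- Aliasing identity: for an absolutely summable Chebyshev coefficient sequence `(c_j)`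
of `f(t) = c₀/2 + Σ_{j≥1} c_j T_j(t)`, the `n`-point Gauss–Chebyshev quadrature
approximations `c_{k,n} = (2/n) Σ_{l=1}^n f(t_l) T_k(t_l)`, with `t_l = cos((2l-1)π/(2n))`,
satisfy `c_{k,n} - c_k = Σ_{j=1}^∞ (-1)^j (c_{2jn-k} + c_{2jn+k})` for `0 ≤ k < 2n`. -/
theorem chebyshev_aliasing (c : ℕ → ℝ) (hc : Summable fun j => |c j|)
    (n : ℕ) (hn : 1 ≤ n) (k : ℕ) (hk : k < 2 * n) :
    (2 / (n : ℝ)) * ∑ l ∈ Finset.Icc 1 n,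
        (c 0 / 2 + ∑' j : ℕ, c (j + 1) *
            (Chebyshev.T ℝ (j + 1 : ℕ)).eval (cos ((2 * (l : ℝ) - 1) * π / (2 * n)))) *
          (Chebyshev.T ℝ (k : ℕ)).eval (cos ((2 * (l : ℝ) - 1) * π / (2 * n))) -
      c k =
    ∑' j : ℕ, (-1 : ℝ) ^ (j + 1) * (c (2 * (j + 1) * n - k) + c (2 * (j + 1) * n + k)) := by
  have hn0 : (n : ℝ) ≠ 0 := by positivity
  have hc1 : Summable fun j => |c (j + 1)| := (summable_nat_add_iff 1).mpr hc
  have hX : ∀ l : ℕ, (2 * (l : ℝ) - 1) * π / (2 * (n : ℝ)) = chebX n l := fun l => rfl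
  simp only [Polynomial.Chebyshev.T_real_cos, hX]
  push_cast
  -- now all Chebyshev evaluations are cosines
  have hsuml : ∀ l : ℕ, Summable (fun j : ℕ =>
      c (j + 1) * Real.cos (((j : ℝ) + 1) * chebX n l) * Real.cos ((k : ℝ) * chebX n l)) := by
    intro l
    apply Summable.of_norm_bounded hc1
    intro j
    rw [Real.norm_eq_abs, abs_mul, abs_mul]
    have h1 := Real.abs_cos_le_one (((j : ℝ) + 1) * chebX n l)
    have h2 := Real.abs_cos_le_one ((k : ℝ) * chebX n l)
    have h3 := abs_nonneg (c (j + 1))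
    exact le_trans (mul_le_of_le_one_right (by positivity) h2)
      (mul_le_of_le_one_right h3 h1)
  have step1 : ∀ l ∈ Finset.Icc 1 n,
      (c 0 / 2 + ∑' j : ℕ, c (j + 1) * Real.cos (((j : ℝ) + 1) * chebX n l)) *
          Real.cos ((k : ℝ) * chebX n l)
        = c 0 / 2 * Real.cos ((k : ℝ) * chebX n l)
          + ∑' j : ℕ, c (j + 1) * Real.cos (((j : ℝ) + 1) * chebX n l) *
              Real.cos ((k : ℝ) * chebX n l) := by
    intro l _
    rw [add_mul, ← tsum_mul_right]
  rw [Finset.sum_congr rfl step1, Finset.sum_add_distrib, mul_add]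
  have hterm1 : 2 / (n : ℝ) * ∑ l ∈ Finset.Icc 1 n, c 0 / 2 * Real.cos ((k : ℝ) * chebX n l)
      = c 0 * chebE n (k : ℤ) := by
    rw [← Finset.mul_sum]
    have hA : ∑ l ∈ Finset.Icc 1 n, Real.cos ((k : ℝ) * chebX n l) = (n : ℝ) * chebE n (k : ℤ) := by
      have := cheb_A n hn (k : ℤ)
      simpa using this
    rw [hA]
    field_simp
  rw [hterm1]
  have hswap : ∑ l ∈ Finset.Icc 1 n, (∑' j : ℕ, c (j + 1) *
        Real.cos (((j : ℝ) + 1) * chebX n l) * Real.cos ((k : ℝ) * chebX n l))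
      = ∑' j : ℕ, ∑ l ∈ Finset.Icc 1 n, c (j + 1) *
          Real.cos (((j : ℝ) + 1) * chebX n l) * Real.cos ((k : ℝ) * chebX n l) :=
    (Summable.tsum_finsetSum fun l _ => hsuml l).symm
  rw [hswap, ← tsum_mul_left]
  have hj : ∀ j : ℕ, 2 / (n : ℝ) * ∑ l ∈ Finset.Icc 1 n, c (j + 1) *
        Real.cos (((j : ℝ) + 1) * chebX n l) * Real.cos ((k : ℝ) * chebX n l)
      = c (j + 1) * chebE n ((j : ℤ) + 1 + (k : ℤ)) + c (j + 1) * chebE n ((j : ℤ) + 1 - (k : ℤ)) := by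
    intro j
    have e1 : ∑ l ∈ Finset.Icc 1 n, c (j + 1) *
          Real.cos (((j : ℝ) + 1) * chebX n l) * Real.cos ((k : ℝ) * chebX n l)
        = c (j + 1) * ∑ l ∈ Finset.Icc 1 n,
            Real.cos ((((j : ℤ) + 1 : ℤ) : ℝ) * chebX n l) *
              Real.cos (((k : ℤ) : ℝ) * chebX n l) := by
      rw [Finset.mul_sum]
      refine Finset.sum_congr rfl fun l _ => ?_
      push_cast
      ring
    rw [e1, show 2 / (n : ℝ) * (c (j + 1) * ∑ l ∈ Finset.Icc 1 n,
        Real.cos ((((j : ℤ) + 1 : ℤ) : ℝ) * chebX n l) * Real.cos (((k : ℤ) : ℝ) * chebX n l))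
      = c (j + 1) * (2 / (n : ℝ) * ∑ l ∈ Finset.Icc 1 n,
        Real.cos ((((j : ℤ) + 1 : ℤ) : ℝ) * chebX n l) * Real.cos (((k : ℤ) : ℝ) * chebX n l)) by ring,
      cheb_B n hn ((j : ℤ) + 1) (k : ℤ)]
    ring
  rw [tsum_congr hj]
  have hSp : Summable fun j : ℕ => c (j + 1) * chebE n ((j : ℤ) + 1 + (k : ℤ)) := by
    apply Summable.of_norm_bounded hc1
    intro j
    rw [Real.norm_eq_abs, abs_mul]
    exact mul_le_of_le_one_right (abs_nonneg _) (chebE_abs_le n ((j : ℤ) + 1 + (k : ℤ)))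
  have hSm : Summable fun j : ℕ => c (j + 1) * chebE n ((j : ℤ) + 1 - (k : ℤ)) := by
    apply Summable.of_norm_bounded hc1
    intro j
    rw [Real.norm_eq_abs, abs_mul]
    exact mul_le_of_le_one_right (abs_nonneg _) (chebE_abs_le n ((j : ℤ) + 1 - (k : ℤ)))
  rw [Summable.tsum_add hSp hSm, cheb_plus c n hn k hk, cheb_minus c hc n hn k hk]
  have hRp : Summable fun q : ℕ => (-1 : ℝ) ^ (q + 1) * c (2 * (q + 1) * n - k) := by
    apply Summable.of_norm_bounded (hc.comp_injective (cheb_injp n k hn hk))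
    intro q
    rw [Real.norm_eq_abs, abs_mul, abs_pow, abs_neg, abs_one, one_pow, one_mul]
    exact le_rfl
  have hRm : Summable fun q : ℕ => (-1 : ℝ) ^ (q + 1) * c (2 * (q + 1) * n + k) := by
    apply Summable.of_norm_bounded (hc.comp_injective (cheb_injm n k hn))
    intro q
    rw [Real.norm_eq_abs, abs_mul, abs_pow, abs_neg, abs_one, one_pow, one_mul]
    exact le_rfl
  have hRHS : ∑' q : ℕ, (-1 : ℝ) ^ (q + 1) * (c (2 * (q + 1) * n - k) + c (2 * (q + 1) * n + k))
      = (∑' q : ℕ, (-1 : ℝ) ^ (q + 1) * c (2 * (q + 1) * n - k))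
        + ∑' q : ℕ, (-1 : ℝ) ^ (q + 1) * c (2 * (q + 1) * n + k) := by
    rw [← Summable.tsum_add hRp hRm]
    exact tsum_congr fun q => by ring
  rw [hRHS]
  by_cases hk0 : k = 0
  · subst hk0
    rw [if_pos rfl]
    norm_num [chebE_zero n hn]
  · rw [if_neg hk0, show ((k : ℕ) : ℤ) = ((k : ℕ) : ℤ) from rfl,
      chebE_small n hn (by omega : 0 < k) hk]
    ring
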